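/- arXiv:2109.10825 — 2 statements merged into one kernel-verified Lean document; each statement's English description precedes it below -/
import Mathlib

section
/- Let R ⊂ S be an FCP Prüfer extension. Then R is t-closed in S; that is, every b ∈ S such that b² − rb ∈ R and b³ − rb² ∈ R for some r ∈ R belongs to R. -/
set_option maxHeartbeats 800000
set_option synthInstance.maxHeartbeats 200000

universe u v

/-- An extension `R ⊆ S` has FCP if every chain of intermediate `R`-subalgebras of `S`
is finite. -/
def Algebra.HasFCP (R S : Type*) [CommRing R] [CommRing S] [Algebra R S] : Prop :=
  ∀ C : Set (Subalgebra R S), IsChain (· ≤ ·) C → C.Finite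

/-- A ring homomorphism is an epimorphism in the category of commutative rings.
(Testing against commutative rings in universe `max u v` suffices, since epimorphy is
detected by the multiplication map `B ⊗[A] B → B`.) -/
def IsRingEpi {A : Type u} {B : Type v} [CommRing A] [CommRing B] (f : A →+* B) : Prop :=
  ∀ (C : Type (max u v)) [CommRing C] (g₁ g₂ : B →+* C), g₁.comp f = g₂.comp f → g₁ = g₂

lemma tmul_comm_of_epi {A : Type u} {B : Type v} [CommRing A] [CommRing B] [Algebra A B]
    (h : IsRingEpi (algebraMap A B)) (x : B) :
    (x ⊗ₜ[A] (1 : B) : TensorProduct A B B) = (1 : B) ⊗ₜ[A] x := by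
  let e : ULift.{max u v} (TensorProduct A B B) ≃+* TensorProduct A B B := ULift.ringEquiv
  have hcomp : (e.symm.toRingHom.comp
        (Algebra.TensorProduct.includeLeftRingHom (R := A) (A := B) (B := B))).comp
        (algebraMap A B)
      = (e.symm.toRingHom.comp
        (Algebra.TensorProduct.includeRight (R := A) (A := B) (B := B)).toRingHom).comp
        (algebraMap A B) := by
    ext r
    simp only [RingHom.comp_apply, RingEquiv.toRingHom_eq_coe, RingHom.coe_coe,
      Algebra.TensorProduct.includeLeftRingHom_apply, AlgHom.toRingHom_eq_coe,
      Algebra.TensorProduct.includeRight_apply]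
    congr 1
    rw [Algebra.algebraMap_eq_smul_one, TensorProduct.smul_tmul,
      ← Algebra.algebraMap_eq_smul_one]
  have h2 := h (ULift.{max u v} (TensorProduct A B B)) _ _ hcomp
  have h3 := congrArg (fun f : B →+* ULift.{max u v} (TensorProduct A B B) => e (f x)) h2
  simpa [e] using h3

section Aux

variable {R : Type u} {S : Type v} [CommRing R] [CommRing S] [Algebra R S]

/-- The conductor-type ideal `{x : R | x·b ∈ R}`. -/
def condIdeal (b : S) : Ideal R where
  carrier := {x : R | algebraMap R S x * b ∈ (⊥ : Subalgebra R S)}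
  add_mem' := by
    intro x y hx hy
    simp only [Set.mem_setOf_eq, map_add, add_mul] at *
    exact add_mem hx hy
  zero_mem' := by
    simp only [Set.mem_setOf_eq, map_zero, zero_mul]
    exact zero_mem _
  smul_mem' := by
    intro c x hx
    simp only [Set.mem_setOf_eq, smul_eq_mul, map_mul, mul_assoc] at *
    exact mul_mem (Subalgebra.algebraMap_mem _ c) hx

lemma mem_condIdeal {b : S} {x : R} :
    x ∈ condIdeal b ↔ algebraMap R S x * b ∈ (⊥ : Subalgebra R S) := Iff.rfl

end Aux

/-- Let `R ⊂ S` be an FCP Prüfer extension.  Then `R` is t-closed in `S`: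
every `b ∈ S` such that `b² − rb ∈ R` and `b³ − rb² ∈ R` for some `r ∈ R` belongs to `R`.
(Here `R` is identified with the bottom subalgebra `⊥` of `S`.) -/
theorem stmt4 {R : Type u} {S : Type v} [CommRing R] [CommRing S] [Algebra R S]
    (hinj : Function.Injective (algebraMap R S))
    (hproper : (⊥ : Subalgebra R S) ≠ ⊤)
    (hFCP : Algebra.HasFCP R S)
    (hPrufer : ∀ T : Subalgebra R S, Module.Flat R T ∧ IsRingEpi (algebraMap R T)) :
    ∀ b : S, (∃ r : R, b ^ 2 - algebraMap R S r * b ∈ (⊥ : Subalgebra R S) ∧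
        b ^ 3 - algebraMap R S r * b ^ 2 ∈ (⊥ : Subalgebra R S)) →
      b ∈ (⊥ : Subalgebra R S) := by
  rintro b ⟨r, hr2, hr3⟩
  clear hr3 hinj hproper hFCP
  set I : Ideal R := condIdeal b with hI
  -- the submodule `R·1 + R·b` of `S`
  set P : Submodule R S := Submodule.span R {(1 : S), b} with hP
  have hbotP : ∀ x ∈ (⊥ : Subalgebra R S), x ∈ P := by
    intro x hx
    obtain ⟨y, rfl⟩ := Algebra.mem_bot.mp hx
    rw [Algebra.algebraMap_eq_smul_one]
    exact P.smul_mem y (Submodule.subset_span (by simp))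
  have hbP : b ∈ P := Submodule.subset_span (by simp)
  have h1P : (1 : S) ∈ P := Submodule.subset_span (by simp)
  have hb2P : b * b ∈ P := by
    have : b * b = r • b + (b ^ 2 - algebraMap R S r * b) := by
      rw [Algebra.smul_def]; ring
    rw [this]
    exact P.add_mem (P.smul_mem _ hbP) (hbotP _ hr2)
  have hmul : ∀ x y : S, x ∈ P → y ∈ P → x * y ∈ P := by
    intro x y hx hy
    induction hx using Submodule.span_induction with
    | mem z hz =>
      induction hy using Submodule.span_induction with
      | mem w hw =>
        rcases hz with rfl | rfl <;> rcases hw with rfl | rfl <;>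
          simp_all [one_mul, mul_one, h1P, hbP, hb2P]
      | zero => simp [zero_mem]
      | add w₁ w₂ _ _ h₁ h₂ => rw [mul_add]; exact P.add_mem h₁ h₂
      | smul c w _ h => rw [mul_smul_comm]; exact P.smul_mem c h
    | zero => simp [zero_mem]
    | add z₁ z₂ _ _ h₁ h₂ => rw [add_mul]; exact P.add_mem h₁ h₂
    | smul c z _ h => rw [smul_mul_assoc]; exact P.smul_mem c h
  -- the subalgebra `T = R[b]`
  set T : Subalgebra R S := P.toSubalgebra h1P hmul with hT
  have hβ : b ∈ T := hbP
  set β : T := ⟨b, hβ⟩ with hβ'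
  -- Step 1 : from the epimorphism hypothesis, `β ⊗ 1 = 1 ⊗ β` in `T ⊗[R] T`.
  have key : (β ⊗ₜ[R] (1 : T) : TensorProduct R T T) = (1 : T) ⊗ₜ[R] β :=
    tmul_comm_of_epi (hPrufer T).2 β
  -- Step 2 : exact sequence `I → R → T/N` with `N = R·1`.
  set N : Submodule R T := Submodule.span R {(1 : T)} with hN
  set g : R →ₗ[R] (T ⧸ N) := N.mkQ.comp (LinearMap.toSpanSingleton R T β) with hg
  have hexact : Function.Exact (Submodule.subtype (I.restrictScalars R)) g := by
    rw [LinearMap.exact_iff, Submodule.range_subtype]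
    ext x
    simp only [LinearMap.mem_ker, hg, LinearMap.comp_apply,
      LinearMap.toSpanSingleton_apply, Submodule.Quotient.mk_eq_zero (p := N),
      Submodule.mkQ_apply]
    rw [hN, Submodule.mem_span_singleton]
    constructor
    · rintro ⟨y, hy⟩
      have : algebraMap R S y = algebraMap R S x * b := by
        have := congrArg (Subtype.val) hy
        simpa [Algebra.smul_def] using this
      rw [Submodule.restrictScalars_mem, hI, mem_condIdeal, ← this]
      exact Subalgebra.algebraMap_mem _ y
    · intro hx
      obtain ⟨y, hy⟩ := Algebra.mem_bot.mp (mem_condIdeal.mp hx)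
      refine ⟨y, Subtype.ext ?_⟩
      simpa [Algebra.smul_def] using hy
  have hgsurj : Function.Surjective g := by
    intro z
    obtain ⟨t, rfl⟩ := N.mkQ_surjective z
    obtain ⟨x, y, hxy⟩ := Submodule.mem_span_pair.mp t.2
    refine ⟨y, ?_⟩
    rw [hg, LinearMap.comp_apply, LinearMap.toSpanSingleton_apply, Submodule.mkQ_apply,
      Submodule.mkQ_apply, Submodule.Quotient.eq]
    have : y • β - t = (-x) • (1 : T) := by
      apply Subtype.ext
      have hxy' : x • (1 : S) + y • b = (t : S) := hxy
      have h1 : ((y • β - t : ↥T) : S) = y • b - (t : S) := by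
        simp [hβ']
      have h2 : (((-x) • (1 : ↥T) : ↥T) : S) = (-x) • (1 : S) := by simp
      rw [h1, h2, ← hxy']
      module
    rw [this]
    exact N.smul_mem _ (Submodule.mem_span_singleton_self _)
  -- Step 3 : tensor the exact sequence with `T` and chase `1 ⊗ 1`.
  have texact := lTensor_exact (M := ↥(I.restrictScalars R)) (N := R)
    (P := T ⧸ N) T hexact hgsurj
  have h0 : LinearMap.lTensor T g ((1 : T) ⊗ₜ[R] (1 : R)) = 0 := by
    have e1 : LinearMap.lTensor T g ((1 : T) ⊗ₜ[R] (1 : R))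
        = LinearMap.lTensor T N.mkQ ((1 : T) ⊗ₜ[R] β) := by
      simp [hg]
    rw [e1, ← key]
    have : N.mkQ (1 : T) = 0 := by
      rw [Submodule.mkQ_apply, Submodule.Quotient.mk_eq_zero]
      exact Submodule.mem_span_singleton_self _
    simp [this]
  obtain ⟨w, hw⟩ := (texact _).mp h0
  -- Step 4 : deduce `1 ∈ I • ⊤` in `T`.
  have h1mem : (1 : T) ∈ (I • (⊤ : Submodule R T) : Submodule R T) := by
    set φ :=
      (TensorProduct.rid R T).toLinearMap.comp
        (LinearMap.lTensor T (Submodule.subtype (I.restrictScalars R))) with hφ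
    have hrange : ∀ w,
        φ w ∈ (I • (⊤ : Submodule R T) : Submodule R T) := by
      intro w
      induction w with
      | zero => rw [map_zero]; exact zero_mem _
      | tmul t i =>
        have : φ (t ⊗ₜ[R] i) = (i : R) • t := by
          rw [hφ, LinearMap.comp_apply, LinearMap.lTensor_tmul]
          simp
        rw [this]
        exact Submodule.smul_mem_smul i.2 trivial
      | add w₁ w₂ h₁ h₂ => rw [map_add]; exact add_mem h₁ h₂
    have hx := hrange w
    rw [hφ, LinearMap.comp_apply, hw] at hx
    simpa using hx
  -- Step 5 : extract a representation `1 = a + c·b` with `a, c ∈ I`.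
  have hrep : ∃ a c : R, a ∈ I ∧ c ∈ I ∧
      (1 : S) = algebraMap R S a + algebraMap R S c * b := by
    have : ∀ t : T, t ∈ (I • (⊤ : Submodule R T) : Submodule R T) →
        ∃ a c : R, a ∈ I ∧ c ∈ I ∧
          (t : S) = algebraMap R S a + algebraMap R S c * b := by
      intro t ht
      refine Submodule.smul_induction_on ht ?_ ?_
      · intro i hi n _
        obtain ⟨x, y, hxy⟩ := Submodule.mem_span_pair.mp n.2
        refine ⟨i * x, i * y, Ideal.mul_mem_right _ _ hi, Ideal.mul_mem_right _ _ hi, ?_⟩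
        have hn : (n : S) = x • (1 : S) + y • b := hxy.symm
        have : ((i • n : ↥T) : S) = i • (n : S) := rfl
        rw [this, hn]
        simp only [Algebra.smul_def, map_mul, map_one, mul_one, smul_add,
          Algebra.smul_def]
        ring
      · intro t₁ t₂ ih₁ ih₂
        obtain ⟨a₁, c₁, ha₁, hc₁, h₁⟩ := ih₁
        obtain ⟨a₂, c₂, ha₂, hc₂, h₂⟩ := ih₂
        refine ⟨a₁ + a₂, c₁ + c₂, I.add_mem ha₁ ha₂, I.add_mem hc₁ hc₂, ?_⟩
        have : ((t₁ + t₂ : ↥T) : S) = (t₁ : S) + (t₂ : S) := rfl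
        rw [this, h₁, h₂]
        simp only [map_add]
        ring
    obtain ⟨a, c, ha, hc, h⟩ := this 1 h1mem
    exact ⟨a, c, ha, hc, by simpa using h⟩
  obtain ⟨a, c, ha, hc, hrep⟩ := hrep
  -- Step 6 : the conductor trick : `1 ∈ I`, hence `b ∈ R`.
  have hu : (1 - a - c * r) ∈ I := by
    rw [hI, mem_condIdeal]
    have : algebraMap R S (1 - a - c * r) * b
        = algebraMap R S c * (b ^ 2 - algebraMap R S r * b) := by
      simp only [map_sub, map_mul, map_one]
      linear_combination b * hrep
    rw [this]
    exact mul_mem (Subalgebra.algebraMap_mem _ c) hr2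
  have h1I : (1 : R) ∈ I := by
    have : (1 : R) = a + c * r + (1 - a - c * r) := by ring
    rw [this]
    exact I.add_mem (I.add_mem ha (Ideal.mul_mem_right _ _ hc)) hu
  have := mem_condIdeal.mp (hI ▸ h1I)
  simpa using this
end

section
/- Let R ⊂ S be an integral FCP extension such that (R,P) and (S,N) are local rings and R/P ⊂ S/N is a finite separable field extension. Then there do not exist distinct T, U ∈ [R,S] such that T ⊂ S and U ⊂ S are both minimal ramified extensions (i.e., minimal and subintegral) with equal conductors (T:S) = (U:S). -/
set_option linter.unusedSectionVars false
set_option maxHeartbeats 1600000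
set_option synthInstance.maxHeartbeats 400000


/-- The residual field extension map `κ(Q ∩ A) → κ(Q)` attached to a ring morphism
`f : A → B` and a prime ideal `Q` of `B`. -/
noncomputable def residualMap {A B : Type*} [CommRing A] [CommRing B] (f : A →+* B)
    (Q : Ideal B) [Q.IsPrime] :
    IsLocalRing.ResidueField (Localization.AtPrime (Q.comap f)) →+*
      IsLocalRing.ResidueField (Localization.AtPrime Q) :=
  IsLocalRing.ResidueField.map (Localization.localRingHom (Q.comap f) Q f rfl)

/-- An extension `A ⊆ B` is infra-integral if it is integral and all its residual
extensions are isomorphisms. -/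
def InfraIntegralExt (A B : Type*) [CommRing A] [CommRing B] [Algebra A B] : Prop :=
  Algebra.IsIntegral A B ∧ ∀ (Q : Ideal B) [Q.IsPrime],
    Function.Bijective (residualMap (algebraMap A B) Q)

/-- An extension `A ⊆ B` is subintegral if it is infra-integral and `Spec B → Spec A` is
injective. -/
def SubintegralExt (A B : Type*) [CommRing A] [CommRing B] [Algebra A B] : Prop :=
  InfraIntegralExt A B ∧
    Function.Injective fun Q : PrimeSpectrum B => PrimeSpectrum.comap (algebraMap A B) Q

/-- The conductor `(T:S)` of an intermediate ring `T` of the extension `R ⊆ S`, i.e. the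
ideal of `S` of all `s ∈ S` with `sS ⊆ T`. -/
def conductorOf {R S : Type*} [CommRing R] [CommRing S] [Algebra R S]
    (T : Subalgebra R S) : Ideal S where
  carrier := {s : S | ∀ t : S, s * t ∈ T}
  add_mem' := by
    intro a b ha hb t
    rw [add_mul]
    exact add_mem (ha t) (hb t)
  zero_mem' := by
    intro t
    rw [zero_mul]
    exact zero_mem _
  smul_mem' := by
    intro c x hx t
    rw [smul_eq_mul, mul_assoc, mul_comm c, mul_assoc]
    exact hx (t * c)

open IsLocalRing Polynomial

section Aux

variable {R S : Type*} [CommRing R] [CommRing S] [Algebra R S] [IsLocalRing S]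

lemma stmt17_isIntegralSub (hint : Algebra.IsIntegral R S) (T : Subalgebra R S) :
    Algebra.IsIntegral ↥T S := by
  haveI := hint
  exact Algebra.IsIntegral.tower_top (R := R) (S := ↥T) (T := S)

lemma stmt17_comap_isMaximal (hint : Algebra.IsIntegral R S) (T : Subalgebra R S) :
    ((maximalIdeal S).comap (algebraMap ↥T S)).IsMaximal := by
  haveI := stmt17_isIntegralSub hint T
  exact Ideal.isMaximal_comap_of_isIntegral_of_isMaximal (maximalIdeal S)

lemma stmt17_isLocalRing (hint : Algebra.IsIntegral R S) (T : Subalgebra R S) :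
    IsLocalRing ↥T := by
  haveI := stmt17_isIntegralSub hint T
  refine IsLocalRing.of_unique_max_ideal
    ⟨(maximalIdeal S).comap (algebraMap ↥T S), stmt17_comap_isMaximal hint T, ?_⟩
  intro I hI
  haveI := hI
  have hker : RingHom.ker (algebraMap ↥T S) ≤ I := by
    have : RingHom.ker (algebraMap ↥T S) = ⊥ :=
      (RingHom.injective_iff_ker_eq_bot _).mp (fun a b h => Subtype.ext h)
    rw [this]; exact bot_le
  obtain ⟨Q, hQmax, hQ⟩ := Ideal.exists_ideal_over_maximal_of_isIntegral I hker
  rw [← hQ, IsLocalRing.eq_maximalIdeal hQmax]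

lemma stmt17_finite (hint : Algebra.IsIntegral R S) {T : Subalgebra R S} (hT : T ⋖ ⊤) :
    Module.Finite ↥T S := by
  haveI := stmt17_isIntegralSub hint T
  obtain ⟨x, -, hx⟩ := SetLike.exists_of_lt hT.lt
  have hxi : IsIntegral ↥T x := Algebra.IsIntegral.isIntegral x
  have hadj : (Algebra.adjoin ↥T {x} : Subalgebra ↥T S) = ⊤ := by
    have hle : T ≤ (Algebra.adjoin ↥T {x}).restrictScalars R := by
      intro t ht
      have : algebraMap ↥T S ⟨t, ht⟩ ∈ Algebra.adjoin ↥T {x} :=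
        Subalgebra.algebraMap_mem (S := Algebra.adjoin ↥T {x}) (⟨t, ht⟩ : ↥T)
      exact this
    have hxa : x ∈ Algebra.adjoin ↥T {x} := Algebra.subset_adjoin rfl
    have hlt : T < (Algebra.adjoin ↥T {x}).restrictScalars R := by
      refine lt_of_le_of_ne hle fun h => hx ?_
      rw [h]
      exact hxa
    have htop : (Algebra.adjoin ↥T {x}).restrictScalars R = ⊤ :=
      (lt_or_eq_of_le (le_top)).resolve_left (hT.2 hlt)
    apply Subalgebra.restrictScalars_injective R
    rw [htop]
    ext y
    simp [Subalgebra.mem_restrictScalars]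
  refine ⟨?_⟩
  rw [← Algebra.top_toSubmodule, ← hadj]
  exact hxi.fg_adjoin_singleton

lemma stmt17_decomp {T : Subalgebra R S} (hT : T ⋖ ⊤) {w : S} (hw : w ∉ T) (s : S) :
    ∃ t ∈ T, ∃ s' : S, s = t + w * s' := by
  classical
  have hmem : ∀ x : S, x ∈ T.toSubmodule ⊔ (Ideal.span {w}).restrictScalars R ↔
      ∃ t ∈ T, ∃ s' : S, x = t + w * s' := by
    intro x
    rw [Submodule.mem_sup]
    constructor
    · rintro ⟨a, ha, b, hb, rfl⟩
      rw [Submodule.restrictScalars_mem] at hb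
      obtain ⟨c, hc⟩ := Ideal.mem_span_singleton'.mp hb
      exact ⟨a, ha, c, by rw [← hc]; ring⟩
    · rintro ⟨t, ht, s', rfl⟩
      refine ⟨t, ht, w * s', ?_, rfl⟩
      rw [Submodule.restrictScalars_mem]
      exact Ideal.mem_span_singleton'.mpr ⟨s', by ring⟩
  have h1 : (1 : S) ∈ T.toSubmodule ⊔ (Ideal.span {w}).restrictScalars R :=
    (hmem 1).mpr ⟨1, one_mem T, 0, by ring⟩
  have hmul : ∀ x y : S, x ∈ T.toSubmodule ⊔ (Ideal.span {w}).restrictScalars R →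
      y ∈ T.toSubmodule ⊔ (Ideal.span {w}).restrictScalars R →
      x * y ∈ T.toSubmodule ⊔ (Ideal.span {w}).restrictScalars R := by
    intro x y hx hy
    obtain ⟨a, ha, b, rfl⟩ := (hmem x).mp hx
    obtain ⟨c, hc, d, rfl⟩ := (hmem y).mp hy
    exact (hmem _).mpr ⟨a * c, mul_mem ha hc, a * d + b * c + w * b * d, by ring⟩
  set W : Subalgebra R S := Submodule.toSubalgebra _ h1 hmul with hW
  have hWmem : ∀ x : S, x ∈ W ↔ ∃ t ∈ T, ∃ s' : S, x = t + w * s' := by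
    intro x; rw [hW, Submodule.mem_toSubalgebra]; exact hmem x
  have hTW : T ≤ W := fun x hx => (hWmem x).mpr ⟨x, hx, 0, by ring⟩
  have hwW : w ∈ W := (hWmem w).mpr ⟨0, zero_mem T, 1, by ring⟩
  have hlt : T < W := lt_of_le_of_ne hTW fun h => hw (h ▸ hwW)
  have htop : W = ⊤ := (lt_or_eq_of_le (le_top)).resolve_left (hT.2 hlt)
  exact (hWmem s).mp (htop ▸ (Algebra.mem_top : s ∈ (⊤ : Subalgebra R S)))

/-- the crucial-maximal-ideal property: N ∩ T ⊆ (T:S) -/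
lemma stmt17_mem_conductor (hint : Algebra.IsIntegral R S) {T : Subalgebra R S} (hT : T ⋖ ⊤)
    {t : S} (htT : t ∈ T) (htN : t ∈ maximalIdeal S) : t ∈ conductorOf T := by
  intro s0
  by_contra hs0
  haveI := stmt17_isLocalRing hint T
  haveI := stmt17_finite hint hT
  set V : Submodule ↥T S := LinearMap.range (Algebra.linearMap ↥T S) with hV
  have hkey : (⊤ : Submodule ↥T (S ⧸ V)) ≤ (maximalIdeal ↥T) • ⊤ := by
    rintro q -
    obtain ⟨s, rfl⟩ := V.mkQ_surjective q
    obtain ⟨τ, hτ, s', hs⟩ := stmt17_decomp hT hs0 s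
    have hsmul : ((⟨t, htT⟩ : ↥T) • (s0 * s') : S) = t * s0 * s' := by
      rw [Algebra.smul_def]
      show t * (s0 * s') = t * s0 * s'
      ring
    have h1 : V.mkQ s = (⟨t, htT⟩ : ↥T) • V.mkQ (s0 * s') := by
      rw [← map_smul]
      have : s - (⟨t, htT⟩ : ↥T) • (s0 * s') = τ := by rw [hsmul, hs]; ring
      have hmem : s - (⟨t, htT⟩ : ↥T) • (s0 * s') ∈ V := by
        rw [this]; exact ⟨⟨τ, hτ⟩, rfl⟩
      have := (Submodule.Quotient.eq V).mpr hmem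
      simpa [Submodule.mkQ_apply] using this
    have h2 : (⟨t, htT⟩ : ↥T) ∈ maximalIdeal ↥T := by
      have := IsLocalRing.eq_maximalIdeal (stmt17_comap_isMaximal hint T)
      rw [← this]
      exact htN
    rw [h1]
    exact Submodule.smul_mem_smul h2 trivial
  have htop := Submodule.eq_bot_of_le_smul_of_le_jacobson_bot (maximalIdeal ↥T) ⊤
      Module.Finite.fg_top hkey
      (by rw [IsLocalRing.jacobson_eq_maximalIdeal ⊥ bot_ne_top])
  apply hT.lt.ne
  refine le_antisymm le_top fun s _ => ?_
  have hq : V.mkQ s ∈ (⊤ : Submodule ↥T (S ⧸ V)) := trivial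
  rw [htop, Submodule.mem_bot, Submodule.mkQ_apply, Submodule.Quotient.mk_eq_zero] at hq
  obtain ⟨τ, hτ⟩ := hq
  have : (τ : S) ∈ T := τ.2
  rwa [show ((τ : S)) = Algebra.linearMap ↥T S τ from rfl, hτ] at this


lemma stmt17_exists_residue (hint : Algebra.IsIntegral R S) {T : Subalgebra R S}
    (hsub : SubintegralExt ↥T S) (s : S) : ∃ t : ↥T, s - ↑t ∈ maximalIdeal S := by
  classical
  have hP'max : ((maximalIdeal S).comap (algebraMap ↥T S)).IsMaximal :=
    stmt17_comap_isMaximal hint T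
  obtain ⟨η, hη⟩ := (hsub.1.2 (maximalIdeal S)).2
      (residue _ (algebraMap S (Localization.AtPrime (maximalIdeal S)) s))
  obtain ⟨z, rfl⟩ := IsLocalRing.residue_surjective η
  obtain ⟨⟨a, m⟩, hz⟩ := IsLocalization.mk'_surjective
      ((maximalIdeal S).comap (algebraMap ↥T S)).primeCompl z
  obtain ⟨m', i, hiP, heq⟩ := hP'max.exists_inv m.2
  refine ⟨a * m', ?_⟩
  have hz0 : ∀ x : ↥T, x ∈ (maximalIdeal S).comap (algebraMap ↥T S) →
      residue _ (algebraMap ↥T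
        (Localization.AtPrime ((maximalIdeal S).comap (algebraMap ↥T S))) x) = 0 := by
    intro x hx
    refine Ideal.Quotient.eq_zero_iff_mem.mpr ?_
    rw [← Localization.AtPrime.comap_maximalIdeal
      (I := (maximalIdeal S).comap (algebraMap ↥T S))] at hx
    exact hx
  have hmm : residue _ (algebraMap ↥T
      (Localization.AtPrime ((maximalIdeal S).comap (algebraMap ↥T S))) (m' * ↑m)) = 1 := by
    have h1 : (m' * ↑m : ↥T) = 1 - i := by rw [← heq]; ring
    rw [h1, map_sub, map_sub, map_one, hz0 i hiP, sub_zero, map_one]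
  have hspec : residue _ z * residue _ (algebraMap ↥T
      (Localization.AtPrime ((maximalIdeal S).comap (algebraMap ↥T S))) ↑m)
      = residue _ (algebraMap ↥T
      (Localization.AtPrime ((maximalIdeal S).comap (algebraMap ↥T S))) a) := by
    rw [← map_mul]
    congr 1
    rw [← hz]
    exact IsLocalization.mk'_spec _ a m
  have hzeq : residue _ z = residue _ (algebraMap ↥T
      (Localization.AtPrime ((maximalIdeal S).comap (algebraMap ↥T S))) (a * m')) := by
    calc residue _ z
        = residue _ z * residue _ (algebraMap ↥T
          (Localization.AtPrime ((maximalIdeal S).comap (algebraMap ↥T S))) (m' * ↑m)) := by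
          rw [hmm, mul_one]
      _ = residue _ z * residue _ (algebraMap ↥T _ (↑m : ↥T)) *
            residue _ (algebraMap ↥T _ m') := by
          rw [map_mul, map_mul]; ring
      _ = residue _ (algebraMap ↥T _ a) * residue _ (algebraMap ↥T _ m') := by rw [hspec]
      _ = residue _ (algebraMap ↥T _ (a * m')) := by rw [map_mul, map_mul]
  have hloc : residualMap (algebraMap ↥T S) (maximalIdeal S)
        (residue _ (algebraMap ↥T
          (Localization.AtPrime ((maximalIdeal S).comap (algebraMap ↥T S))) (a * m')))
      = residue _ (algebraMap S (Localization.AtPrime (maximalIdeal S))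
          (algebraMap ↥T S (a * m'))) := by
    show IsLocalRing.ResidueField.map _ (residue _ _) = _
    rw [IsLocalRing.ResidueField.map_residue, Localization.localRingHom_to_map]
  rw [hzeq, hloc] at hη
  have hmem : algebraMap S (Localization.AtPrime (maximalIdeal S))
        (s - algebraMap ↥T S (a * m'))
      ∈ maximalIdeal (Localization.AtPrime (maximalIdeal S)) := by
    rw [map_sub]
    exact (Ideal.Quotient.eq).mp hη.symm
  have hco := Localization.AtPrime.comap_maximalIdeal (I := maximalIdeal S)
  rw [← hco]
  exact hmem


lemma mem_conductorOf_iff {T : Subalgebra R S} {s : S} :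
    s ∈ conductorOf T ↔ ∀ x : S, s * x ∈ T := Iff.rfl

lemma stmt17_aeval_mem (W : Subalgebra R S) {x : S} (hx : x ∈ W) (G : Polynomial R) :
    aeval x G ∈ W := by
  have h := Polynomial.aeval_algebraMap_apply (B := S) (⟨x, hx⟩ : ↥W) G
  rw [show (algebraMap ↥W S ⟨x, hx⟩ : S) = x from rfl] at h
  rw [h]
  exact (aeval (⟨x, hx⟩ : ↥W) G).2

lemma stmt17_sq_mem_conductor (hint : Algebra.IsIntegral R S) {T : Subalgebra R S}
    (hT : T ⋖ ⊤) (hsub : SubintegralExt ↥T S)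
    {a b : S} (ha : a ∈ maximalIdeal S) (hb : b ∈ maximalIdeal S) :
    a * b ∈ conductorOf T := by
  obtain ⟨x, -, hx⟩ := SetLike.exists_of_lt hT.lt
  obtain ⟨t₀, ht₀⟩ := stmt17_exists_residue hint hsub x
  have hzN : x - ↑t₀ ∈ maximalIdeal S := ht₀
  have hzT : x - ↑t₀ ∉ T := by
    intro h
    apply hx
    have hxe : x = (x - ↑t₀) + ↑t₀ := by ring
    rw [hxe]
    exact add_mem h t₀.2
  set z := x - ↑t₀ with hzdef
  have hz2T : z * z ∈ T := by
    by_contra h2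
    obtain ⟨t, ht, s', hs⟩ := stmt17_decomp hT h2 z
    have htN : t ∈ maximalIdeal S := by
      have he : t = z - z * z * s' := by linear_combination -hs
      rw [he]
      exact sub_mem hzN (Ideal.mul_mem_right _ _ (Ideal.mul_mem_right _ _ hzN))
    have htC : t ∈ conductorOf T := stmt17_mem_conductor hint hT ht htN
    have hun : IsUnit (1 - z * s') :=
      IsLocalRing.isUnit_one_sub_self_of_mem_nonunits _ (Ideal.mul_mem_right _ _ hzN)
    obtain ⟨w, hw⟩ := hun
    have hzt : z * (1 - z * s') = t := by linear_combination hs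
    have hzu : z = t * ↑w⁻¹ := by
      rw [← hzt, ← hw, mul_assoc, Units.mul_inv, mul_one]
    apply hzT
    rw [hzu]
    exact (mem_conductorOf_iff.mp htC) ↑w⁻¹
  have hz2C : z * z ∈ conductorOf T :=
    stmt17_mem_conductor hint hT hz2T (Ideal.mul_mem_right _ _ hzN)
  obtain ⟨t₁, ht₁, s₁, ha1⟩ := stmt17_decomp hT hzT a
  obtain ⟨t₂, ht₂, s₂, hb2⟩ := stmt17_decomp hT hzT b
  have ht₁N : t₁ ∈ maximalIdeal S := by
    have he : t₁ = a - z * s₁ := by linear_combination -ha1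
    rw [he]; exact sub_mem ha (Ideal.mul_mem_right _ _ hzN)
  have ht₂N : t₂ ∈ maximalIdeal S := by
    have he : t₂ = b - z * s₂ := by linear_combination -hb2
    rw [he]; exact sub_mem hb (Ideal.mul_mem_right _ _ hzN)
  have ht₁C := stmt17_mem_conductor hint hT ht₁ ht₁N
  have ht₂C := stmt17_mem_conductor hint hT ht₂ ht₂N
  have habe : a * b = t₁ * b + t₂ * (z * s₁) + (z * z) * (s₁ * s₂) := by
    rw [ha1, hb2]; ring
  rw [habe]
  exact add_mem (add_mem (Ideal.mul_mem_right _ _ ht₁C) (Ideal.mul_mem_right _ _ ht₂C))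
    (Ideal.mul_mem_right _ _ hz2C)

lemma stmt17_le [IsLocalRing R] [IsLocalHom (algebraMap R S)]
    (hint : Algebra.IsIntegral R S)
    (hres : letI : Algebra (ResidueField R) (ResidueField S) :=
        (ResidueField.map (algebraMap R S)).toAlgebra
      Module.Finite (ResidueField R) (ResidueField S) ∧
        Algebra.IsSeparable (ResidueField R) (ResidueField S))
    {T U : Subalgebra R S} (hT : T ⋖ ⊤) (hU : U ⋖ ⊤) (hsU : SubintegralExt ↥U S)
    (hC : conductorOf T = conductorOf U) : T ≤ U := by
  letI : Algebra (ResidueField R) (ResidueField S) :=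
    (ResidueField.map (algebraMap R S)).toAlgebra
  obtain ⟨hfin, hsep⟩ := hres
  haveI := hfin
  haveI := hsep
  intro t ht
  obtain ⟨u, hu⟩ := stmt17_exists_residue hint hsU t
  have hfsep : (minpoly (ResidueField R) (residue S t)).Separable :=
    Algebra.IsSeparable.isSeparable _ _
  obtain ⟨F, hF⟩ := Polynomial.map_surjective (residue R) residue_surjective
    (minpoly (ResidueField R) (residue S t))
  have hcomm : (residue S).comp (algebraMap R S)
      = (algebraMap (ResidueField R) (ResidueField S)).comp (residue R) := by
    ext r
    exact (ResidueField.map_residue (algebraMap R S) r).symm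
  have heval : ∀ (G : Polynomial R) (x : S),
      residue S (aeval x G) = aeval (residue S x) (G.map (residue R)) := by
    intro G x
    simp only [aeval_def]
    rw [hom_eval₂, hcomm, eval₂_map]
  have hresu : residue S (↑u : S) = residue S t := by
    refine Ideal.Quotient.eq.mpr ?_
    have := neg_mem hu
    simpa using this
  have hFt_mem : aeval t F ∈ maximalIdeal S := by
    have h0 : residue S (aeval t F) = 0 := by
      rw [heval, hF, minpoly.aeval]
    exact Ideal.Quotient.eq_zero_iff_mem.mp h0
  have hFu_mem : aeval (↑u : S) F ∈ maximalIdeal S := by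
    have h0 : residue S (aeval (↑u : S) F) = 0 := by
      rw [heval, hresu, hF, minpoly.aeval]
    exact Ideal.Quotient.eq_zero_iff_mem.mp h0
  have hFtC : aeval t F ∈ conductorOf U := by
    rw [← hC]
    exact stmt17_mem_conductor hint hT (stmt17_aeval_mem T ht F) hFt_mem
  have hFuC : aeval (↑u : S) F ∈ conductorOf U :=
    stmt17_mem_conductor hint hU (stmt17_aeval_mem U u.2 F) hFu_mem
  have hev : ∀ x : S, (F.map (algebraMap R S)).eval x = aeval x F := by
    intro x; rw [eval_map, ← aeval_def]
  have hev' : ∀ x : S, (derivative (F.map (algebraMap R S))).eval x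
      = aeval x (derivative F) := by
    intro x; rw [derivative_map, eval_map, ← aeval_def]
  obtain ⟨k, hk⟩ := (F.map (algebraMap R S)).binomExpansion (↑u : S) (t - ↑u)
  rw [show ((↑u : S) + (t - ↑u)) = t by ring] at hk
  rw [hev t, hev (↑u : S), hev' (↑u : S)] at hk
  have hn2 : (t - ↑u) * (t - ↑u) ∈ conductorOf U :=
    stmt17_sq_mem_conductor hint hU hsU hu hu
  have hprod : aeval (↑u : S) (derivative F) * (t - ↑u) ∈ conductorOf U := by
    have he : aeval (↑u : S) (derivative F) * (t - ↑u)
        = aeval t F - aeval (↑u : S) F - k * ((t - ↑u) * (t - ↑u)) := by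
      linear_combination -hk
    rw [he]
    exact Ideal.sub_mem _ (Ideal.sub_mem _ hFtC hFuC) (Ideal.mul_mem_left _ _ hn2)
  have hdu : IsUnit (aeval (↑u : S) (derivative F)) := by
    have hne : residue S (aeval (↑u : S) (derivative F)) ≠ 0 := by
      rw [heval, hresu, ← derivative_map, hF]
      exact hfsep.aeval_derivative_ne_zero (minpoly.aeval _ _)
    by_contra hun
    exact hne (Ideal.Quotient.eq_zero_iff_mem.mpr
      ((IsLocalRing.mem_maximalIdeal _).mpr (mem_nonunits_iff.mpr hun)))
  have hnC : t - ↑u ∈ conductorOf U := by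
    obtain ⟨w, hw⟩ := hdu
    have he : t - ↑u = ↑w⁻¹ * (aeval (↑u : S) (derivative F) * (t - ↑u)) := by
      rw [← mul_assoc, ← hw, Units.inv_mul, one_mul]
    rw [he]
    exact Ideal.mul_mem_left _ _ hprod
  have hnU : t - ↑u ∈ U := by
    have h1 := (mem_conductorOf_iff.mp hnC) 1
    simpa using h1
  have hte : t = ↑u + (t - ↑u) := by ring
  rw [hte]
  exact add_mem u.2 hnU

end Aux

/-- Let `R ⊂ S` be an integral FCP extension of local rings such that
the residue field extension `R/P ⊂ S/N` is finite and separable.  Then there do not exist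
two distinct intermediate rings `T, U` such that `T ⊂ S` and `U ⊂ S` are minimal ramified
(i.e. minimal and subintegral) with the same conductor. -/
theorem stmt17 {R S : Type*} [CommRing R] [CommRing S] [Algebra R S]
    [IsLocalRing R] [IsLocalRing S] [IsLocalHom (algebraMap R S)]
    (hinj : Function.Injective (algebraMap R S))
    (hproper : (⊥ : Subalgebra R S) ≠ ⊤)
    (hFCP : Algebra.HasFCP R S)
    (hint : Algebra.IsIntegral R S)
    (hres :
      letI : Algebra (IsLocalRing.ResidueField R) (IsLocalRing.ResidueField S) :=
        (IsLocalRing.ResidueField.map (algebraMap R S)).toAlgebra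
      Module.Finite (IsLocalRing.ResidueField R) (IsLocalRing.ResidueField S) ∧
        Algebra.IsSeparable (IsLocalRing.ResidueField R) (IsLocalRing.ResidueField S)) :
    ∀ T U : Subalgebra R S,
      T ⋖ (⊤ : Subalgebra R S) → SubintegralExt T S →
      U ⋖ (⊤ : Subalgebra R S) → SubintegralExt U S →
      conductorOf T = conductorOf U → T = U := by
  intro T U hT hsT hU hsU hC
  exact le_antisymm (stmt17_le hint hres hT hU hsU hC)
    (stmt17_le hint hres hU hT hsT hC.symm)
end
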